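/- If the top-k and (k+1)-th largest counts of an integer-valued histogram H with ℓ∞-sensitivity 1 per bin and at most 2 bins changed between neighbors satisfy H(k) − H(k+1) > 2, then the set of top-k indices of H is identical to the set of top-k indices of H' for every neighboring histogram H'. -/
import Mathlib


open Finset

/-- If `S` is the top-`k` index set of the integer histogram `H` with a gap greater
than `2` between the `k`-th and `(k+1)`-th largest counts (i.e. every count inside `S`
exceeds every count outside `S` by at least `3`), then for every neighbouring histogram
`H'` (each bin changes by at most `1` and at most two bins change), `S` is still the
top-`k` index set of `H'`: every count of `H'` inside `S` strictly exceeds every count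
of `H'` outside `S`. -/
theorem topk_invariant_of_gap {D k : ℕ} (H H' : Fin D → ℤ)
    (S : Finset (Fin D)) (hS : S.card = k)
    (hgap : ∀ i ∈ S, ∀ j ∉ S, H j + 3 ≤ H i)
    (hbin : ∀ j, |H j - H' j| ≤ 1)
    (hdiff : (Finset.univ.filter fun j => H j ≠ H' j).card ≤ 2) :
    ∀ i ∈ S, ∀ j ∉ S, H' j < H' i := by
  intro i hi j hj
  have h1 := abs_le.mp (hbin i)
  have h2 := abs_le.mp (hbin j)
  have := hgap i hi j hj
  omega
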